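/- Let s, t ∈ ℝ² (Euclidean plane), let p be a point of the open segment between s and t, let ρ > 0, and let γ : ℝ → ℝ² be continuous on [0,1] with γ(0) = s, γ(1) = t, and dist(γ(x), p) ≥ ρ for all x ∈ [0,1]. Then eVariationOn γ [0,1] ≥ √(dist(s,p)² + ρ²) + √(dist(p,t)² + ρ²); in particular, since ρ > 0, this is strictly greater than edist(s, t) = dist(s,p) + dist(p,t). -/

import Mathlib

open scoped ENNReal

open RealInnerProductSpace in
/-- A path from `s` to `t` staying at distance at least `ρ > 0` from a point `p` of the open
segment between `s` and `t` has length at least `√(dist(s,p)² + ρ²) + √(dist(p,t)² + ρ²)`;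
in particular it is strictly longer than the Euclidean distance `dist(s,p) + dist(p,t)`. -/
theorem eVariationOn_ge_of_avoids_ball (s t p : EuclideanSpace ℝ (Fin 2))
    (hp : p ∈ openSegment ℝ s t) (ρ : ℝ) (hρ : 0 < ρ)
    (γ : ℝ → EuclideanSpace ℝ (Fin 2)) (hγ : ContinuousOn γ (Set.Icc 0 1))
    (h0 : γ 0 = s) (h1 : γ 1 = t) (hfar : ∀ x ∈ Set.Icc (0:ℝ) 1, ρ ≤ dist (γ x) p) :
    ENNReal.ofReal (Real.sqrt (dist s p ^ 2 + ρ ^ 2) + Real.sqrt (dist p t ^ 2 + ρ ^ 2)) ≤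
        eVariationOn γ (Set.Icc 0 1) ∧
      edist s t < eVariationOn γ (Set.Icc 0 1) := by
  obtain ⟨a, b, ha, hb, hab, hpab⟩ := hp
  set v : EuclideanSpace ℝ (Fin 2) := t - s with hv
  have hps : s - p = -(b • v) := by
    rw [← hpab, show a = 1 - b by linarith, hv]; module
  have hpt : t - p = a • v := by
    rw [← hpab, show b = 1 - a by linarith, hv]; module
  -- intermediate value: there is c with ⟪γ c - p, v⟫ = 0
  set f : ℝ → ℝ := fun x => ⟪γ x - p, v⟫ with hf
  have hfc : ContinuousOn f (Set.Icc 0 1) :=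
    (hγ.sub continuousOn_const).inner continuousOn_const
  have hf0 : f 0 = -(b * ‖v‖ ^ 2) := by
    show ⟪γ 0 - p, v⟫ = _
    rw [h0, hps, inner_neg_left, real_inner_smul_left, real_inner_self_eq_norm_sq]
  have hf1 : f 1 = a * ‖v‖ ^ 2 := by
    show ⟪γ 1 - p, v⟫ = _
    rw [h1, hpt, real_inner_smul_left, real_inner_self_eq_norm_sq]
  have h0mem : (0:ℝ) ∈ Set.Icc (f 0) (f 1) := by
    constructor
    · rw [hf0]; simp only [neg_nonpos]; positivity
    · rw [hf1]; positivity
  obtain ⟨c, hc, hfc0⟩ := intermediate_value_Icc (by norm_num : (0:ℝ) ≤ 1) hfc h0mem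
  set q := γ c with hq
  set w : EuclideanSpace ℝ (Fin 2) := q - p with hw
  have hwv : ⟪w, v⟫ = 0 := hfc0
  have hwρ : ρ ≤ ‖w‖ := by
    simpa [hw, dist_eq_norm] using hfar c hc
  -- distance estimates
  have hsq : Real.sqrt (dist s p ^ 2 + ρ ^ 2) ≤ dist s q := by
    have h1 : dist s q ^ 2 = ‖s - p‖ ^ 2 + ‖w‖ ^ 2 := by
      have : s - q = (s - p) - w := by rw [hw]; abel
      rw [dist_eq_norm, this, @norm_sub_sq_real]
      have : ⟪s - p, w⟫ = 0 := by
        rw [hps, inner_neg_left, real_inner_smul_left, real_inner_comm, hwv]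
        ring
      rw [this]; ring
    have h2 : dist s p ^ 2 + ρ ^ 2 ≤ dist s q ^ 2 := by
      rw [h1, dist_eq_norm]
      have := pow_le_pow_left₀ hρ.le hwρ 2
      linarith
    calc Real.sqrt (dist s p ^ 2 + ρ ^ 2) ≤ Real.sqrt (dist s q ^ 2) :=
          Real.sqrt_le_sqrt h2
      _ = dist s q := by rw [Real.sqrt_sq dist_nonneg]
  have htq : Real.sqrt (dist p t ^ 2 + ρ ^ 2) ≤ dist q t := by
    have h1 : dist q t ^ 2 = ‖t - p‖ ^ 2 + ‖w‖ ^ 2 := by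
      have heq : t - q = (t - p) - w := by rw [hw]; abel
      rw [dist_comm, dist_eq_norm, heq, @norm_sub_sq_real]
      have : ⟪t - p, w⟫ = 0 := by
        rw [hpt, real_inner_smul_left, real_inner_comm, hwv]; ring
      rw [this]; ring
    have h2 : dist p t ^ 2 + ρ ^ 2 ≤ dist q t ^ 2 := by
      rw [h1, ← dist_eq_norm, dist_comm t p]
      have := pow_le_pow_left₀ hρ.le hwρ 2
      linarith
    calc Real.sqrt (dist p t ^ 2 + ρ ^ 2) ≤ Real.sqrt (dist q t ^ 2) :=
          Real.sqrt_le_sqrt h2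
      _ = dist q t := by rw [Real.sqrt_sq dist_nonneg]
  -- variation lower bound via the partition 0, c, 1
  have hvar : edist s q + edist q t ≤ eVariationOn γ (Set.Icc 0 1) := by
    set u : ℕ → ℝ := fun n => if n = 0 then 0 else if n = 1 then c else 1 with hu
    have hmono : Monotone u := by
      apply monotone_nat_of_le_succ
      intro n
      match n with
      | 0 => simpa [hu] using hc.1
      | 1 => simpa [hu] using hc.2
      | (n+2) => simp [hu]
    have hmem : ∀ i, u i ∈ Set.Icc (0:ℝ) 1 := by
      intro i
      match i with
      | 0 => simp [hu]
      | 1 => simpa [hu] using hc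
      | (n+2) => simp [hu]
    have := eVariationOn.sum_le (f := γ) (n := 2) hmono hmem
    have hsum : ∑ i ∈ Finset.range 2, edist (γ (u (i + 1))) (γ (u i)) =
        edist s q + edist q t := by
      rw [Finset.sum_range_succ, Finset.sum_range_one]
      simp only [hu]
      norm_num
      rw [edist_comm (γ c) (γ 0), edist_comm (γ 1) (γ c), h0, h1, hq]
    rwa [hsum] at this
  have hofreal : ENNReal.ofReal (Real.sqrt (dist s p ^ 2 + ρ ^ 2) +
      Real.sqrt (dist p t ^ 2 + ρ ^ 2)) ≤ edist s q + edist q t := by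
    rw [ENNReal.ofReal_add (Real.sqrt_nonneg _) (Real.sqrt_nonneg _),
      edist_dist, edist_dist]
    exact add_le_add (ENNReal.ofReal_le_ofReal hsq) (ENNReal.ofReal_le_ofReal htq)
  have hmain := hofreal.trans hvar
  refine ⟨hmain, ?_⟩
  -- strict inequality
  have hlt1 : dist s p < Real.sqrt (dist s p ^ 2 + ρ ^ 2) :=
    (Real.lt_sqrt dist_nonneg).mpr (by nlinarith)
  have hlt2 : dist p t < Real.sqrt (dist p t ^ 2 + ρ ^ 2) :=
    (Real.lt_sqrt dist_nonneg).mpr (by nlinarith)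
  calc edist s t = ENNReal.ofReal (dist s t) := edist_dist s t
    _ ≤ ENNReal.ofReal (dist s p + dist p t) :=
        ENNReal.ofReal_le_ofReal (dist_triangle s p t)
    _ < ENNReal.ofReal (Real.sqrt (dist s p ^ 2 + ρ ^ 2) +
          Real.sqrt (dist p t ^ 2 + ρ ^ 2)) := by
        rw [ENNReal.ofReal_lt_ofReal_iff (by positivity)]
        exact add_lt_add hlt1 hlt2
    _ ≤ eVariationOn γ (Set.Icc 0 1) := hmain
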